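/- Let f be C^{n+1} on a compact interval I with ‖f^{(n+1)}‖_I ≤ (n+1)!·m_{n+1}, and let E ⊆ I be a measurable subset of positive measure containing at least n+1 points spaced by at least |E|/n. Then ‖f‖_I ≤ (2e|I|/|E|)^n · ‖f‖_E + m_{n+1}·|I|^{n+1}. -/

import Mathlib

open Set MeasureTheory Finset

section helpers
open Polynomial

theorem Polynomial.contDiff_eval' (p : ℝ[X]) {k : WithTop ℕ∞} :
    ContDiff ℝ k fun t => p.eval t := by
  induction p using Polynomial.induction_on' with
  | add p q hp hq => simpa using hp.add hq
  | monomial m c =>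
    simpa [Polynomial.eval_monomial] using (contDiff_const.mul (contDiff_id.pow m))

theorem poly_iteratedDerivWithin (k : ℕ) (p : ℝ[X]) {s : Set ℝ} (hs : UniqueDiffOn ℝ s)
    {x : ℝ} (hx : x ∈ s) :
    iteratedDerivWithin k (fun t => p.eval t) s x = (Polynomial.derivative^[k] p).eval x := by
  induction k generalizing p x with
  | zero => simp
  | succ k IH =>
    rw [iteratedDerivWithin_succ', Function.iterate_succ_apply]
    rw [← IH (Polynomial.derivative p) hx]
    have heq : Set.EqOn (derivWithin (fun t => p.eval t) s)
        (fun t => (Polynomial.derivative p).eval t) s := by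
      intro y hy
      rw [DifferentiableAt.derivWithin (Polynomial.differentiableAt (𝕜 := ℝ) (p := p))
        (hs.uniqueDiffWithinAt hy)]
      exact p.deriv
    exact iteratedDerivWithin_congr heq hx

theorem iterated_rolle {a b : ℝ} (hab : a < b) (k : ℕ) (F : ℝ → ℝ)
    (hF : ContDiffOn ℝ k F (Icc a b))
    (hy : ∃ y : Fin (k+1) → ℝ, StrictMono y ∧ (∀ i, y i ∈ Icc a b) ∧ ∀ i, F (y i) = 0) :
    ∃ c ∈ Icc a b, iteratedDerivWithin k F (Icc a b) c = 0 := by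
  induction k generalizing F with
  | zero =>
    obtain ⟨y, -, hmem, hzero⟩ := hy
    exact ⟨y 0, hmem 0, by simpa using hzero 0⟩
  | succ k IH =>
    obtain ⟨y, hmono, hmem, hzero⟩ := hy
    have hud : UniqueDiffOn ℝ (Icc a b) := uniqueDiffOn_Icc hab
    have hstep : ∀ i : Fin (k+1), ∃ c, c ∈ Ioo (y i.castSucc) (y i.succ) ∧
        derivWithin F (Icc a b) c = 0 := by
      intro i
      have hlt : y i.castSucc < y i.succ := hmono (Fin.castSucc_lt_succ (i := i))
      obtain ⟨c, hc, hc0⟩ := exists_deriv_eq_zero hlt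
        ((hF.continuousOn).mono (Icc_subset_Icc (hmem i.castSucc).1 (hmem i.succ).2))
        ((hzero i.castSucc).trans (hzero i.succ).symm)
      refine ⟨c, hc, ?_⟩
      rw [derivWithin_of_mem_nhds (Icc_mem_nhds (lt_of_le_of_lt (hmem i.castSucc).1 hc.1)
        (lt_of_lt_of_le hc.2 (hmem i.succ).2))]
      exact hc0
    choose z hz hz0 using hstep
    have hzicc : ∀ i, z i ∈ Icc a b := fun i =>
      ⟨(hmem i.castSucc).1.trans (hz i).1.le, (hz i).2.le.trans (hmem i.succ).2⟩
    have hzmono : StrictMono z := by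
      rw [Fin.strictMono_iff_lt_succ]
      intro i
      calc z i.castSucc < y i.castSucc.succ := (hz i.castSucc).2
        _ = y i.succ.castSucc := by rw [Fin.succ_castSucc]
        _ < z i.succ := (hz i.succ).1
    have hF' : ContDiffOn ℝ k (derivWithin F (Icc a b)) (Icc a b) :=
      hF.derivWithin hud (by exact_mod_cast le_refl _)
    obtain ⟨c, hc, hc0⟩ := IH (derivWithin F (Icc a b)) hF' ⟨z, hzmono, hzicc, hz0⟩
    exact ⟨c, hc, by rw [iteratedDerivWithin_succ']; exact hc0⟩

theorem gap_lower {n : ℕ} (x : Fin (n+1) → ℝ) (δ : ℝ)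
    (hgap : ∀ i : Fin n, δ ≤ x i.succ - x i.castSucc) :
    ∀ (d : ℕ) (i j : Fin (n+1)), (j : ℕ) = i + d → (d : ℝ) * δ ≤ x j - x i := by
  intro d
  induction d with
  | zero => intro i j h; have : j = i := Fin.ext (by omega); simp [this]
  | succ d IH =>
    intro i j h
    have hd : (i : ℕ) + d < n + 1 := by omega
    set j' : Fin (n+1) := ⟨i + d, hd⟩ with hj'
    have h1 : (d : ℝ) * δ ≤ x j' - x i := IH i j' rfl
    have hin : (i : ℕ) + d < n := by omega
    have h2 : δ ≤ x j - x j' := by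
      have := hgap ⟨i + d, hin⟩
      have e1 : (⟨i + d, hin⟩ : Fin n).succ = j := Fin.ext (by simp; omega)
      have e2 : (⟨i + d, hin⟩ : Fin n).castSucc = j' := Fin.ext (by simp [hj'])
      rwa [e1, e2] at this
    push_cast
    linarith

theorem nat_dist_prod (n : ℕ) (i : Fin (n+1)) :
    ∏ j ∈ Finset.univ.erase i, Nat.dist i.val j.val
      = i.val.factorial * (n - i.val).factorial := by
  have h1 : ∏ j ∈ Finset.univ.erase i, Nat.dist i.val j.val
      = ∏ j ∈ (Finset.range (n+1)).erase i.val, Nat.dist i.val j := by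
    refine Finset.prod_bij (fun j _ => (j : ℕ)) ?_ ?_ ?_ ?_
    · intro j hj
      rw [Finset.mem_erase] at hj ⊢
      exact ⟨fun h => hj.1 (Fin.ext h), Finset.mem_range.2 j.isLt⟩
    · intro j₁ _ j₂ _ h; exact Fin.ext h
    · intro j hj
      rw [Finset.mem_erase, Finset.mem_range] at hj
      exact ⟨⟨j, hj.2⟩, Finset.mem_erase.2 ⟨fun h => hj.1 (congrArg Fin.val h),
        Finset.mem_univ _⟩, rfl⟩
    · intros; rfl
  rw [h1]
  have h2 : (Finset.range (n+1)).erase i.val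
      = Finset.range i.val ∪ Finset.Ico (i.val+1) (n+1) := by
    ext j
    simp only [Finset.mem_erase, Finset.mem_range, Finset.mem_union, Finset.mem_Ico]
    omega
  rw [h2, Finset.prod_union (by
    rw [Finset.disjoint_left]; intro j hj hj'
    simp only [Finset.mem_range] at hj
    simp only [Finset.mem_Ico] at hj'
    omega)]
  have h3 : ∏ j ∈ Finset.range i.val, Nat.dist i.val j = i.val.factorial := by
    rw [← Finset.prod_range_reflect]
    rw [Finset.prod_congr rfl (g := fun j => j + 1) (fun j hj => by
      rw [Finset.mem_range] at hj
      simp only [Nat.dist]; omega)]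
    exact Finset.prod_range_add_one_eq_factorial _
  have h4 : ∏ j ∈ Finset.Ico (i.val+1) (n+1), Nat.dist i.val j = (n - i.val).factorial := by
    rw [Finset.prod_Ico_eq_prod_range]
    have e : n + 1 - (i.val + 1) = n - i.val := by omega
    rw [e, Finset.prod_congr rfl (g := fun j => j + 1) (fun j hj => by
      simp only [Nat.dist]; omega)]
    exact Finset.prod_range_add_one_eq_factorial _
  rw [h3, h4]

theorem lagrange_eval_abs_le {n : ℕ} (x : Fin (n+1) → ℝ)
    (r : Fin (n+1) → ℝ) (y : ℝ) :
    |(Lagrange.interpolate Finset.univ x r).eval y|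
      ≤ ∑ i : Fin (n+1), |r i| * ∏ j ∈ Finset.univ.erase i, (|y - x j| / |x i - x j|) := by
  rw [Lagrange.interpolate_apply]
  rw [Polynomial.eval_finset_sum]
  refine (Finset.abs_sum_le_sum_abs _ _).trans ?_
  refine Finset.sum_le_sum fun i _ => ?_
  rw [Polynomial.eval_mul, Polynomial.eval_C, abs_mul]
  refine mul_le_mul_of_nonneg_left ?_ (abs_nonneg _)
  rw [Lagrange.basis, Polynomial.eval_prod]
  rw [Finset.abs_prod]
  refine le_of_eq (Finset.prod_congr rfl fun j hj => ?_)
  rw [Lagrange.basisDivisor, Polynomial.eval_mul, Polynomial.eval_C, Polynomial.eval_sub,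
    Polynomial.eval_X, Polynomial.eval_C, abs_mul, abs_inv, div_eq_inv_mul, abs_sub_comm (x i)]

theorem iter_deriv_add (k : ℕ) (p q : ℝ[X]) :
    Polynomial.derivative^[k] (p + q)
      = Polynomial.derivative^[k] p + Polynomial.derivative^[k] q := by
  induction k generalizing p q with
  | zero => rfl
  | succ k IH =>
    rw [Function.iterate_succ_apply, Function.iterate_succ_apply, Function.iterate_succ_apply,
      derivative_add, IH]

theorem top_deriv_poly {n : ℕ} (x : Fin (n+1) → ℝ) (hinj : Function.Injective x)
    (r : Fin (n+1) → ℝ) (c : ℝ) :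
    Polynomial.derivative^[n+1] (Lagrange.interpolate Finset.univ x r
      + Polynomial.C c * Lagrange.nodal Finset.univ x) = Polynomial.C (c * (n+1).factorial) := by
  rw [iter_deriv_add]
  have hP : Polynomial.derivative^[n+1] (Lagrange.interpolate Finset.univ x r) = 0 := by
    refine Polynomial.iterate_derivative_eq_zero ?_
    have hdeg := Lagrange.degree_interpolate_lt (s := Finset.univ) (v := x) (r := r)
      (Function.Injective.injOn hinj)
    have hcard : #(Finset.univ : Finset (Fin (n+1))) = n+1 := by simp
    rw [hcard] at hdeg
    rcases eq_or_ne (Lagrange.interpolate Finset.univ x r) 0 with h | h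
    · simp [h]
    · exact (natDegree_lt_iff_degree_lt h).2 hdeg
  have hQ : Polynomial.derivative^[n+1] (Lagrange.nodal Finset.univ x)
      = Polynomial.C ((n+1).factorial : ℝ) := by
    have hsub : Polynomial.derivative^[n+1]
        ((X : ℝ[X])^(n+1) - Lagrange.nodal Finset.univ x) = 0 := by
      refine Polynomial.iterate_derivative_eq_zero ?_
      rcases eq_or_ne ((X : ℝ[X])^(n+1) - Lagrange.nodal Finset.univ x) 0 with h | h
      · simp [h]
      refine (natDegree_lt_iff_degree_lt h).2 ?_
      have hdeg : ((X : ℝ[X])^(n+1)).degree = (Lagrange.nodal Finset.univ x).degree := by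
        rw [degree_X_pow, Lagrange.degree_nodal, Finset.card_univ]
        simp
      have := Polynomial.degree_sub_lt hdeg (pow_ne_zero _ X_ne_zero)
        (by rw [Polynomial.leadingCoeff_X_pow]; exact (Lagrange.nodal_monic).symm)
      rw [degree_X_pow] at this
      exact this
    have e : Lagrange.nodal Finset.univ x
        = (X : ℝ[X])^(n+1) - ((X : ℝ[X])^(n+1) - Lagrange.nodal Finset.univ x) := by ring
    rw [e, Polynomial.iterate_derivative_sub, hsub, sub_zero,
      Polynomial.iterate_derivative_X_pow_eq_C_mul]
    have e2 : n + 1 - (n + 1) = 0 := by omega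
    rw [e2, pow_zero, mul_one, Nat.descFactorial_self]
  rw [hP, Polynomial.iterate_derivative_C_mul, hQ, zero_add, ← Polynomial.C_mul]

theorem pow_div_factorial_le_exp_pow (n : ℕ) :
    ((n : ℝ))^n / n.factorial ≤ Real.exp 1 ^ n := by
  have hs := Real.sum_le_exp_of_nonneg (x := (n : ℝ)) (Nat.cast_nonneg n) (n+1)
  have hterm := Finset.single_le_sum (f := fun i => (n : ℝ)^i / i.factorial)
    (fun i _ => by positivity) (Finset.self_mem_range_succ n)
  have he : Real.exp 1 ^ n = Real.exp n := by
    rw [← Real.exp_nat_mul, mul_one]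
  rw [he]
  linarith

end helpers

theorem local_estimate_with_remainder (n : ℕ) (hn : 1 ≤ n) (a b : ℝ) (hab : a < b)
    (f : ℝ → ℝ) (hf : ContDiffOn ℝ (n + 1) f (Icc a b))
    (m : ℝ) (hm : ∀ x ∈ Icc a b,
      |iteratedDerivWithin (n + 1) f (Icc a b) x| ≤ ((n + 1).factorial : ℝ) * m)
    (E : Set ℝ) (hE : E ⊆ Icc a b) (hEm : MeasurableSet E) (hEpos : 0 < volume E)
    (hpts : ∃ x : Fin (n + 1) → ℝ, (∀ i, x i ∈ E) ∧ StrictMono x ∧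
      ∀ i : Fin n, (volume E).toReal / n ≤ x i.succ - x i.castSucc) :
    ∀ y ∈ Icc a b,
      |f y| ≤ (2 * Real.exp 1 * (b - a) / (volume E).toReal) ^ n *
          sSup ((fun z => |f z|) '' E) + m * (b - a) ^ (n + 1) := by
  intro y hy
  have hba : (0:ℝ) < b - a := sub_pos.2 hab
  obtain ⟨x, hxE, hxmono, hxgap⟩ := hpts
  have hud : UniqueDiffOn ℝ (Icc a b) := uniqueDiffOn_Icc hab
  have hxmem : ∀ i, x i ∈ Icc a b := fun i => hE (hxE i)
  have hinj : Function.Injective x := hxmono.injective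
  have hn0 : (0:ℝ) < n := by exact_mod_cast hn
  set ε := (volume E).toReal with hεdef
  have hε0 : 0 < ε := ENNReal.toReal_pos hEpos.ne'
    (ne_of_lt (lt_of_le_of_lt (measure_mono hE) measure_Icc_lt_top))
  set δ := ε / n with hδdef
  have hδ0 : 0 < δ := div_pos hε0 hn0
  have hgap : ∀ i : Fin n, δ ≤ x i.succ - x i.castSucc := hxgap
  set S := sSup ((fun z => |f z|) '' E) with hS
  have hcont : ContinuousOn (fun z => |f z|) (Icc a b) := (hf.continuousOn).abs
  have hbdd : BddAbove ((fun z => |f z|) '' E) :=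
    BddAbove.mono (Set.image_mono hE)
      (isCompact_Icc.image_of_continuousOn hcont).bddAbove
  have hfS : ∀ i, |f (x i)| ≤ S := fun i => le_csSup hbdd ⟨x i, hxE i, rfl⟩
  have hS0 : 0 ≤ S := le_trans (abs_nonneg _) (hfS 0)
  have hm0 : 0 ≤ m := by
    have h1 := hm a (left_mem_Icc.2 hab.le)
    have h2 : (0:ℝ) ≤ ((n+1).factorial : ℝ) * m := le_trans (abs_nonneg _) h1
    have h3 : (0:ℝ) < ((n+1).factorial : ℝ) := by exact_mod_cast (n+1).factorial_pos
    nlinarith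
  set P := Lagrange.interpolate Finset.univ x (fun i => f (x i)) with hP
  set K := (2 * Real.exp 1 * (b - a) / ε) ^ n with hK
  have hcard : ∀ i : Fin (n+1), (Finset.univ.erase i).card = n := by
    intro i
    rw [Finset.card_erase_of_mem (Finset.mem_univ i), Finset.card_univ]
    simp
  have hdist : ∀ i j : Fin (n+1), i ≠ j → (Nat.dist i.val j.val : ℝ) * δ ≤ |x i - x j| := by
    intro i j hij
    rcases lt_or_gt_of_ne hij with h | h
    · have hvle : (j : ℕ) = i + (j.val - i.val) := by
        have : (i : ℕ) < j := h
        omega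
      have hd := gap_lower x δ hgap (j.val - i.val) i j hvle
      rw [abs_sub_comm, abs_of_pos (sub_pos.2 (hxmono h))]
      have he : (Nat.dist i.val j.val : ℝ) = ((j.val - i.val : ℕ) : ℝ) := by
        congr 1
        simp only [Nat.dist]
        have : (i:ℕ) < j := h
        omega
      rw [he]; exact hd
    · have hvle : (i : ℕ) = j + (i.val - j.val) := by
        have : (j : ℕ) < i := h
        omega
      have hd := gap_lower x δ hgap (i.val - j.val) j i hvle
      rw [abs_of_pos (sub_pos.2 (hxmono h))]
      have he : (Nat.dist i.val j.val : ℝ) = ((i.val - j.val : ℕ) : ℝ) := by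
        congr 1
        simp only [Nat.dist]
        have : (j:ℕ) < i := h
        omega
      rw [he]; exact hd
  have hBlow : ∀ i : Fin (n+1),
      δ^n * ((i.val.factorial : ℝ) * (n - i.val).factorial)
        ≤ ∏ j ∈ Finset.univ.erase i, |x i - x j| := by
    intro i
    have step1 : δ^n * ((i.val.factorial : ℝ) * (n - i.val).factorial)
        = ∏ j ∈ Finset.univ.erase i, ((Nat.dist i.val j.val : ℝ) * δ) := by
      rw [Finset.prod_mul_distrib, Finset.prod_const, hcard i, ← Nat.cast_prod, nat_dist_prod]
      push_cast
      ring
    rw [step1]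
    refine Finset.prod_le_prod (fun j hj => by positivity) (fun j hj => ?_)
    exact hdist i j (Finset.ne_of_mem_erase hj).symm
  have habs : ∀ z ∈ Icc a b, |y - z| ≤ b - a := by
    intro z hz
    rw [abs_le]
    constructor <;> [linarith [hy.1, hy.2, hz.1, hz.2]; linarith [hy.1, hy.2, hz.1, hz.2]]
  have hfactpos : ∀ i : Fin (n+1), (0:ℝ) < (i.val.factorial : ℝ) * (n - i.val).factorial := by
    intro i
    have h1 : (0:ℝ) < (i.val.factorial : ℝ) := by exact_mod_cast i.val.factorial_pos
    have h2 : (0:ℝ) < ((n - i.val).factorial : ℝ) := by exact_mod_cast (n - i.val).factorial_pos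
    positivity
  have key1 : |P.eval y| ≤ K * S := by
    refine (lagrange_eval_abs_le x (fun i => f (x i)) y).trans ?_
    have h2 : ∀ i : Fin (n+1),
        |f (x i)| * ∏ j ∈ Finset.univ.erase i, (|y - x j| / |x i - x j|)
          ≤ S * ((b-a)^n / (δ^n * ((i.val.factorial : ℝ) * (n - i.val).factorial))) := by
      intro i
      refine mul_le_mul (hfS i) ?_ (Finset.prod_nonneg fun j _ => by positivity) hS0
      rw [Finset.prod_div_distrib]
      refine div_le_div₀ (pow_nonneg hba.le n) ?_ (mul_pos (pow_pos hδ0 n) (hfactpos i)) (hBlow i)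
      calc ∏ j ∈ Finset.univ.erase i, |y - x j|
          ≤ ∏ j ∈ Finset.univ.erase i, (b - a) :=
            Finset.prod_le_prod (fun _ _ => abs_nonneg _) (fun j _ => habs (x j) (hxmem j))
        _ = (b-a)^n := by rw [Finset.prod_const, hcard i]
    refine (Finset.sum_le_sum fun i _ => h2 i).trans ?_
    have h3 : ∑ i : Fin (n+1),
        S * ((b-a)^n / (δ^n * ((i.val.factorial : ℝ) * (n - i.val).factorial)))
        = S * ((b-a)^n/δ^n) * ((2:ℝ)^n / n.factorial) := by
      rw [← Finset.mul_sum]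
      have hterm : ∀ i : Fin (n+1),
          (b-a)^n / (δ^n * ((i.val.factorial : ℝ) * (n - i.val).factorial))
            = (b-a)^n/δ^n * ((n.choose i.val : ℝ) / n.factorial) := by
        intro i
        have hle : i.val ≤ n := Nat.lt_succ_iff.mp i.isLt
        have hcmf : ((n.choose i.val : ℝ)) * (i.val.factorial : ℝ) * ((n-i.val).factorial : ℝ)
            = (n.factorial : ℝ) := by
          exact_mod_cast congrArg Nat.cast (Nat.choose_mul_factorial_mul_factorial hle)
        have hf1 : (0:ℝ) < (n.factorial : ℝ) := by exact_mod_cast n.factorial_pos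
        have hf2 := hfactpos i
        rw [div_mul_div_comm, div_eq_div_iff (mul_pos (pow_pos hδ0 n) hf2).ne'
          (mul_pos (pow_pos hδ0 n) hf1).ne']
        linear_combination (-(b-a)^n * δ^n) * hcmf
      rw [Finset.sum_congr rfl (fun i _ => hterm i), ← Finset.mul_sum, ← Finset.sum_div]
      have hch : ∑ i : Fin (n+1), (n.choose i.val : ℝ) = (2:ℝ)^n := by
        rw [Fin.sum_univ_eq_sum_range (fun i => (n.choose i : ℝ))]
        exact_mod_cast Nat.sum_range_choose n
      rw [hch]
      ring
    rw [h3]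
    have hmain : (b-a)^n/δ^n * ((2:ℝ)^n / n.factorial) ≤ K := by
      have e1 : (b-a)^n/δ^n * ((2:ℝ)^n/n.factorial)
          = (2*(b-a)/ε)^n * ((n:ℝ)^n / n.factorial) := by
        rw [hδdef]
        have hf1 : (0:ℝ) < (n.factorial : ℝ) := by exact_mod_cast n.factorial_pos
        field_simp
        rw [div_pow, div_pow, mul_pow]
        field_simp
      have e2 : (2*(b-a)/ε)^n * ((n:ℝ)^n/n.factorial) ≤ (2*(b-a)/ε)^n * (Real.exp 1)^n :=
        mul_le_mul_of_nonneg_left (pow_div_factorial_le_exp_pow n)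
          (pow_nonneg (div_nonneg (by linarith) hε0.le) n)
      have e3 : (2*(b-a)/ε)^n * (Real.exp 1)^n = K := by
        rw [hK, ← mul_pow]
        congr 1
        field_simp
      linarith
    calc S * ((b-a)^n/δ^n) * ((2:ℝ)^n / n.factorial)
        = ((b-a)^n/δ^n * ((2:ℝ)^n / n.factorial)) * S := by ring
      _ ≤ K * S := mul_le_mul_of_nonneg_right hmain hS0
  have hfC : ContDiffOn ℝ ((n+1 : ℕ) : WithTop ℕ∞) f (Icc a b) := by exact_mod_cast hf
  have key2 : |f y - P.eval y| ≤ m * (b - a)^(n+1) := by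
    by_cases hyn : ∃ i, y = x i
    · obtain ⟨i, rfl⟩ := hyn
      rw [hP, Lagrange.eval_interpolate_at_node (r := fun i => f (x i)) (Function.Injective.injOn hinj)
        (Finset.mem_univ i)]
      rw [sub_self, abs_zero]
      positivity
    · push_neg at hyn
      set Q := Lagrange.nodal Finset.univ x with hQ
      have hQy : Polynomial.eval y Q ≠ 0 := by
        rw [hQ, Lagrange.eval_nodal]
        exact Finset.prod_ne_zero_iff.2 fun i _ => sub_ne_zero.2 (hyn i)
      set c := (f y - Polynomial.eval y P) / Polynomial.eval y Q with hc
      have hfyP : f y - Polynomial.eval y P = c * Polynomial.eval y Q :=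
        (div_mul_cancel₀ _ hQy).symm
      set p := P + Polynomial.C c * Q with hp
      set g := fun t => f t - Polynomial.eval t p with hg
      have hgx : ∀ i, g (x i) = 0 := by
        intro i
        simp only [hg, hp, Polynomial.eval_add, Polynomial.eval_mul, Polynomial.eval_C]
        rw [hP, Lagrange.eval_interpolate_at_node (r := fun i => f (x i)) (Function.Injective.injOn hinj)
          (Finset.mem_univ i), hQ, Lagrange.eval_nodal_at_node (Finset.mem_univ i)]
        ring
      have hgy : g y = 0 := by
        simp only [hg, hp, Polynomial.eval_add, Polynomial.eval_mul, Polynomial.eval_C]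
        linarith [hfyP]
      set s : Finset ℝ := insert y (Finset.image x Finset.univ) with hsdef
      have hymem : y ∉ Finset.image x Finset.univ := by
        simp only [Finset.mem_image]
        rintro ⟨i, -, hi⟩
        exact hyn i hi.symm
      have hscard : s.card = (n+1)+1 := by
        rw [hsdef, Finset.card_insert_of_notMem hymem,
          Finset.card_image_of_injective _ hinj, Finset.card_univ]
        simp
      have hsub : ∀ t ∈ s, t ∈ Icc a b := by
        intro t ht
        rw [hsdef, Finset.mem_insert] at ht
        rcases ht with rfl | ht
        · exact hy
        · obtain ⟨i, -, rfl⟩ := Finset.mem_image.1 ht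
          exact hxmem i
      have hzero : ∀ t ∈ s, g t = 0 := by
        intro t ht
        rw [hsdef, Finset.mem_insert] at ht
        rcases ht with rfl | ht
        · exact hgy
        · obtain ⟨i, -, rfl⟩ := Finset.mem_image.1 ht
          exact hgx i
      have hgC : ContDiffOn ℝ ((n+1 : ℕ) : WithTop ℕ∞) g (Icc a b) := by
        have hpc : ContDiffOn ℝ ((n+1 : ℕ) : WithTop ℕ∞) (fun t => Polynomial.eval t p)
          (Icc a b) := (p.contDiff_eval').contDiffOn
        exact hfC.sub hpc
      obtain ⟨ξ, hξ, hξ0⟩ := iterated_rolle hab (n+1) g hgC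
        ⟨fun i => ((s.orderIsoOfFin hscard i : ℝ)),
         fun i j hij => Subtype.coe_lt_coe.2 ((s.orderIsoOfFin hscard).strictMono hij),
         fun i => hsub _ (s.orderIsoOfFin hscard i).2,
         fun i => hzero _ (s.orderIsoOfFin hscard i).2⟩
      have hsplit : iteratedDerivWithin (n+1) g (Icc a b) ξ
          = iteratedDerivWithin (n+1) f (Icc a b) ξ - c * ((n+1).factorial : ℝ) := by
        have hgeq : g = f - (fun t => Polynomial.eval t p) := by
          funext t
          simp [hg]
        have h1 := iteratedDerivWithin_sub hξ hud (hfC.contDiffWithinAt hξ)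
          ((p.contDiff_eval' (k := ((n+1:ℕ) : WithTop ℕ∞))).contDiffOn.contDiffWithinAt hξ)
        rw [hgeq, h1, poly_iteratedDerivWithin (n+1) p hud hξ, hp, hP, hQ,
          top_deriv_poly x hinj _ c, Polynomial.eval_C]
      have hfp : (0:ℝ) < ((n+1).factorial : ℝ) := by exact_mod_cast (n+1).factorial_pos
      have hcm : |c| ≤ m := by
        have h2 := hm ξ hξ
        rw [hsplit] at hξ0
        have h3 : iteratedDerivWithin (n+1) f (Icc a b) ξ = c * ((n+1).factorial : ℝ) := by
          linarith
        rw [h3, abs_mul, abs_of_pos hfp] at h2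
        exact le_of_mul_le_mul_right (by linarith) hfp
      have hQb : |Polynomial.eval y Q| ≤ (b-a)^(n+1) := by
        rw [hQ, Lagrange.eval_nodal, Finset.abs_prod]
        calc ∏ i : Fin (n+1), |y - x i| ≤ ∏ _i : Fin (n+1), (b - a) :=
              Finset.prod_le_prod (fun _ _ => abs_nonneg _) (fun i _ => habs (x i) (hxmem i))
          _ = (b-a)^(n+1) := by rw [Finset.prod_const, Finset.card_univ]; simp
      rw [hfyP, abs_mul]
      exact mul_le_mul hcm hQb (abs_nonneg _) hm0
  have hfin : |f y| ≤ |Polynomial.eval y P| + |f y - Polynomial.eval y P| := by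
    have h := abs_add_le (Polynomial.eval y P) (f y - Polynomial.eval y P)
    simpa using h
  rw [hP] at key1
  linarith [key1, key2, hfin]
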